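/- Let d, k be positive integers, β > 0, and S defined by T^k S(T) = ∫_0^T ((d+k+1)t+k) t^{k-1}(t+β)^d dt. Then S(T) is divisible by (T+β)^d (as a polynomial) if and only if β = 1, in which case S(T) = (T+β)^{d+1}. -/

import Mathlib

open Polynomial intervalIntegral Finset

noncomputable def auxQ (d k : ℕ) (β : ℝ) : Polynomial ℝ :=
  ∑ j ∈ Finset.range (d+1), Polynomial.C ((d.choose j : ℝ) * β^(d-j) / (k+j)) * Polynomial.X^j

noncomputable def auxG (d k : ℕ) (β : ℝ) (t : ℝ) : ℝ :=
  ∑ j ∈ Finset.range (d+1), ((d.choose j : ℝ) * β^(d-j) / (k+j)) * t^(k+j)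

lemma auxG_hasDeriv (d k : ℕ) (hk : 0 < k) (β t : ℝ) :
    HasDerivAt (auxG d k β) (t^(k-1) * (t+β)^d) t := by
  have h : HasDerivAt (auxG d k β)
      (∑ j ∈ Finset.range (d+1), (d.choose j : ℝ) * β^(d-j) * (t^(k-1) * t^j)) t := by
    apply HasDerivAt.fun_sum
    intro j hj
    have h1 := (hasDerivAt_pow (k+j) t).const_mul ((d.choose j : ℝ) * β^(d-j) / (k+j))
    refine h1.congr_deriv ?_
    have hk' : (0:ℝ) < (k:ℝ) := by exact_mod_cast hk
    have hkj : (k:ℝ) + (j:ℝ) ≠ 0 := by positivity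
    have he : k + j - 1 = (k-1) + j := by omega
    rw [he, pow_add]
    push_cast
    field_simp
  refine h.congr_deriv ?_
  rw [add_pow, Finset.mul_sum]
  apply Finset.sum_congr rfl
  intro j hj
  ring

lemma auxG_zero (d k : ℕ) (hk : 0 < k) (β : ℝ) : auxG d k β 0 = 0 := by
  unfold auxG
  apply Finset.sum_eq_zero
  intro j hj
  rw [zero_pow (by omega), mul_zero]

lemma auxG_eq_integral (d k : ℕ) (hk : 0 < k) (β : ℝ) (T : ℝ) :
    auxG d k β T = ∫ t in (0:ℝ)..T, t^(k-1) * (t+β)^d := by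
  rw [intervalIntegral.integral_eq_sub_of_hasDerivAt
    (f := auxG d k β) (fun x _ => auxG_hasDeriv d k hk β x)
    ((Continuous.intervalIntegrable (by fun_prop) _ _))]
  rw [auxG_zero d k hk β, sub_zero]

lemma auxG_mul (d k : ℕ) (β x : ℝ) :
    x^k * (auxQ d k β).eval x = auxG d k β x := by
  unfold auxQ auxG
  rw [Polynomial.eval_finset_sum, Finset.mul_sum]
  apply Finset.sum_congr rfl
  intro j hj
  rw [Polynomial.eval_mul, Polynomial.eval_C, Polynomial.eval_pow, Polynomial.eval_X, pow_add]
  ring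

lemma auxF_hasDeriv (d k : ℕ) (hk : 0 < k) (β t : ℝ) :
    HasDerivAt (fun t => t^k*(t+β)^(d+1) + ((k:ℝ)*(1-β)) * auxG d k β t)
      (((d + k + 1) * t + k) * t ^ (k - 1) * (t + β) ^ d) t := by
  have h1 := (hasDerivAt_pow k t).mul (((hasDerivAt_id t).add_const β).pow (d+1))
  have h2 := (auxG_hasDeriv d k hk β t).const_mul ((k:ℝ)*(1-β))
  have h := h1.add h2
  refine h.congr_deriv ?_
  have htk : t^k = t^(k-1) * t := by
    rw [← pow_succ, Nat.sub_add_cancel hk]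
  simp only [Nat.add_sub_cancel, mul_one, id_eq, Pi.pow_apply]
  rw [htk, pow_succ]
  push_cast
  ring

lemma key_integral (d k : ℕ) (hk : 0 < k) (β : ℝ) (T : ℝ) :
    (∫ t in (0:ℝ)..T, ((d + k + 1) * t + k) * t ^ (k - 1) * (t + β) ^ d)
      = T^k*(T+β)^(d+1) + ((k:ℝ)*(1-β)) * auxG d k β T := by
  rw [intervalIntegral.integral_eq_sub_of_hasDerivAt
    (f := fun t => t^k*(t+β)^(d+1) + ((k:ℝ)*(1-β)) * auxG d k β t)
    (fun x _ => auxF_hasDeriv d k hk β x)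
    ((Continuous.intervalIntegrable (by fun_prop) _ _))]
  rw [auxG_zero d k hk β, zero_pow hk.ne', zero_mul, mul_zero, add_zero, sub_zero]

lemma auxQ_eval_ne (d k : ℕ) (hk : 0 < k) (β : ℝ) (hβ : 0 < β) :
    (auxQ d k β).eval (-β) ≠ 0 := by
  have hInt : (∫ t in (-β)..(0:ℝ), t^(k-1) * (t+β)^d) ≠ 0 := by
    have hint : IntervalIntegrable (fun t => t^(k-1) * (t+β)^d) MeasureTheory.volume (-β) 0 :=
      Continuous.intervalIntegrable (by fun_prop) _ _
    rcases Nat.even_or_odd (k-1) with hev | hod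
    · refine ne_of_gt (intervalIntegral.intervalIntegral_pos_of_pos_on hint ?_ (by linarith))
      intro x hx
      have hx0 : x ≠ 0 := ne_of_lt hx.2
      exact mul_pos (hev.pow_pos hx0) (pow_pos (by linarith [hx.1]) d)
    · have hneg : (∫ t in (-β)..(0:ℝ), -(t^(k-1) * (t+β)^d)) > 0 := by
        refine intervalIntegral.intervalIntegral_pos_of_pos_on hint.neg ?_ (by linarith)
        intro x hx
        have : x^(k-1) < 0 := hod.pow_neg hx.2
        have : x^(k-1) * (x+β)^d < 0 :=
          mul_neg_of_neg_of_pos this (pow_pos (by linarith [hx.1]) d)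
        linarith
      rw [intervalIntegral.integral_neg] at hneg
      intro h; rw [h] at hneg; simp at hneg
  have hrel : (-β)^k * (auxQ d k β).eval (-β)
      = -(∫ t in (-β)..(0:ℝ), t^(k-1) * (t+β)^d) := by
    rw [auxG_mul, auxG_eq_integral d k hk β, intervalIntegral.integral_symm]
  intro h
  rw [h, mul_zero] at hrel
  exact hInt (by linarith)

theorem stmt_13 (d k : ℕ) (hd : 0 < d) (hk : 0 < k) (β : ℝ) (hβ : 0 < β)
    (S : Polynomial ℝ)
    (hS : ∀ T : ℝ, T ^ k * S.eval T
      = ∫ t in (0:ℝ)..T, ((d + k + 1) * t + k) * t ^ (k - 1) * (t + β) ^ d) :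
    (((Polynomial.X + Polynomial.C β) ^ d ∣ S) ↔ β = 1) ∧
    (β = 1 → ∀ T : ℝ, S.eval T = (T + β) ^ (d + 1)) := by
  -- polynomial identity
  have hSR : S = (X + C β)^(d+1) + C ((k:ℝ)*(1-β)) * auxQ d k β := by
    have hX : (X : Polynomial ℝ)^k ≠ 0 := pow_ne_zero _ X_ne_zero
    apply mul_left_cancel₀ hX
    apply Polynomial.funext
    intro x
    simp only [Polynomial.eval_mul, Polynomial.eval_pow, Polynomial.eval_X,
      Polynomial.eval_add, Polynomial.eval_C]
    rw [hS x, key_integral d k hk β x, mul_add, ← auxG_mul d k β x]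
    ring
  constructor
  · constructor
    · intro hdvd
      by_contra hβ1
      have hc : ((k:ℝ)*(1-β)) ≠ 0 := by
        have : (k:ℝ) ≠ 0 := Nat.cast_ne_zero.mpr hk.ne'
        have : (1:ℝ) - β ≠ 0 := fun h => hβ1 (by linarith)
        positivity
      have hdvd2 : (X + C β)^d ∣ C ((k:ℝ)*(1-β)) * auxQ d k β := by
        have h1 : (X + C β)^d ∣ (X + C β)^(d+1) := pow_dvd_pow _ (by omega)
        have := dvd_sub (hSR ▸ hdvd) h1
        simpa using this
      have hdvd3 : (X + C β) ∣ C ((k:ℝ)*(1-β)) * auxQ d k β :=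
        dvd_trans (dvd_pow_self _ hd.ne') hdvd2
      have : (X - C (-β)) ∣ C ((k:ℝ)*(1-β)) * auxQ d k β := by
        simpa using hdvd3
      rw [Polynomial.dvd_iff_isRoot] at this
      have := this
      simp only [Polynomial.IsRoot, Polynomial.eval_mul, Polynomial.eval_C] at this
      rcases mul_eq_zero.mp this with h | h
      · exact hc h
      · exact auxQ_eval_ne d k hk β hβ h
    · intro h
      rw [hSR, h]
      simp
      exact Dvd.intro _ rfl
  · intro h T
    rw [hSR, h]
    simp
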